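/- arXiv:1505.03898 — 6 statements merged into one kernel-verified Lean document; each statement's English description precedes it below -/
import Mathlib

section
/- Let τ ≥ −1, μ > 0, c ∈ ℝ, u_1, …, u_m ∈ ℝⁿ, y_1, …, y_m ∈ {−1, +1}. Define the Lagrangian L(x, e, z, β, ξ) = μ‖e‖₁ + (1/m)∑_{i=1}^m L_τ(z_i) + ⟨β, x − e⟩ + ∑_{i=1}^m ξ_i(c − y_i⟨u_i, x⟩ − z_i). If ‖β‖_∞ ≤ μ and −τ/m ≤ ξ_i ≤ 1/m for all i, then the infimum of L(x, e, z, β, ξ) over all e ∈ ℝⁿ, z ∈ ℝᵐ, and x ∈ ℝⁿ with ‖x‖₂ ≤ 1 equals c∑_{i=1}^m ξ_i − ‖∑_{i=1}^m ξ_i y_i u_i − β‖₂. -/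
open scoped RealInnerProductSpace

/-- The infimum of the Lagrangian of the ep-SVM problem over `e ∈ ℝⁿ`, `z ∈ ℝᵐ` and
`x` in the unit ball equals the dual objective `c ∑ ξ_i - ‖∑ ξ_i y_i u_i - β‖₂`,
whenever `‖β‖_∞ ≤ μ` and `-τ/m ≤ ξ_i ≤ 1/m`. -/
theorem lagrangian_inf {n m : ℕ} (hm : 0 < m) (τ μ c : ℝ) (hτ : -1 ≤ τ) (hμ : 0 < μ)
    (u : Fin m → EuclideanSpace ℝ (Fin n)) (y : Fin m → ℝ)
    (hy : ∀ i, y i = 1 ∨ y i = -1)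
    (L : ℝ → ℝ) (hL : L = fun t => if 0 ≤ t then t else -τ * t)
    (β : EuclideanSpace ℝ (Fin n)) (ξ : Fin m → ℝ)
    (hβ : ∀ j, |β j| ≤ μ) (hξ : ∀ i, -τ / (m : ℝ) ≤ ξ i ∧ ξ i ≤ 1 / (m : ℝ)) :
    IsGLB { v : ℝ | ∃ x e : EuclideanSpace ℝ (Fin n), ∃ z : Fin m → ℝ, ‖x‖ ≤ 1 ∧
        v = μ * (∑ j : Fin n, |e j|) + (1 / (m : ℝ)) * (∑ i : Fin m, L (z i)) +
            ⟪β, x - e⟫ + ∑ i : Fin m, ξ i * (c - y i * ⟪u i, x⟫ - z i) }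
      (c * (∑ i : Fin m, ξ i) - ‖(∑ i : Fin m, ξ i • (y i • u i)) - β‖) := by
  subst hL
  set w : EuclideanSpace ℝ (Fin n) := ∑ i : Fin m, ξ i • (y i • u i) with hw
  have hwx : ∀ x : EuclideanSpace ℝ (Fin n),
      ⟪w, x⟫ = ∑ i : Fin m, ξ i * (y i * ⟪u i, x⟫) := by
    intro x
    rw [hw, sum_inner]
    refine Finset.sum_congr rfl fun i _ => ?_
    rw [real_inner_smul_left, real_inner_smul_left]
  have key : IsLeast { v : ℝ | ∃ x e : EuclideanSpace ℝ (Fin n), ∃ z : Fin m → ℝ, ‖x‖ ≤ 1 ∧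
        v = μ * (∑ j : Fin n, |e j|) +
            (1 / (m : ℝ)) * (∑ i : Fin m, (fun t => if 0 ≤ t then t else -τ * t) (z i)) +
            ⟪β, x - e⟫ + ∑ i : Fin m, ξ i * (c - y i * ⟪u i, x⟫ - z i) }
      (c * (∑ i : Fin m, ξ i) - ‖w - β‖) := by
    constructor
    · -- membership: choose optimal x, e = 0, z = 0
      by_cases hwβ : w = β
      · refine ⟨0, 0, 0, by simp, ?_⟩
        simp [hwβ, Finset.mul_sum, mul_comm]
      · have hne : ‖w - β‖ ≠ 0 := by
          simp [sub_eq_zero, hwβ]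
        refine ⟨‖w - β‖⁻¹ • (w - β), 0, 0, ?_, ?_⟩
        · rw [norm_smul, norm_inv, norm_norm, inv_mul_cancel₀ hne]
        · have h1 : ⟪β, ‖w - β‖⁻¹ • (w - β) - 0⟫ = ‖w - β‖⁻¹ * ⟪β, w - β⟫ := by
            rw [sub_zero, real_inner_smul_right]
          have h2 : ∑ i : Fin m, ξ i * (c - y i * ⟪u i, ‖w - β‖⁻¹ • (w - β)⟫ - (0:ℝ))
              = c * (∑ i : Fin m, ξ i) - ⟪w, ‖w - β‖⁻¹ • (w - β)⟫ := by
            rw [hwx, Finset.mul_sum, ← Finset.sum_sub_distrib]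
            refine Finset.sum_congr rfl fun i _ => ?_
            ring
          have h3 : ⟪w, ‖w - β‖⁻¹ • (w - β)⟫ = ‖w - β‖⁻¹ * ⟪w, w - β⟫ := by
            rw [real_inner_smul_right]
          have h4 : ⟪w, w - β⟫ - ⟪β, w - β⟫ = ‖w - β‖ ^ 2 := by
            rw [← inner_sub_left, real_inner_self_eq_norm_sq]
          have h5 : ‖w - β‖⁻¹ * ⟪w, w - β⟫ - ‖w - β‖⁻¹ * ⟪β, w - β⟫ = ‖w - β‖ := by
            rw [← mul_sub, h4]
            field_simp
          simp only [PiLp.zero_apply, Pi.zero_apply]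
          rw [h1, h2, h3]
          simp only [abs_zero, le_refl, if_true, Finset.sum_const_zero, mul_zero,
            zero_add, add_zero]
          linarith [h5]
    · -- lower bound
      rintro v ⟨x, e, z, hx, rfl⟩
      have hA : 0 ≤ μ * (∑ j : Fin n, |e j|) - ⟪β, e⟫ := by
        have : ⟪β, e⟫ ≤ ∑ j : Fin n, μ * |e j| := by
          rw [PiLp.inner_apply]
          refine Finset.sum_le_sum fun j _ => ?_
          simp only [RCLike.inner_apply, conj_trivial]
          rw [mul_comm]
          calc β j * e j ≤ |β j * e j| := le_abs_self _
            _ = |β j| * |e j| := abs_mul _ _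
            _ ≤ μ * |e j| := by
                exact mul_le_mul_of_nonneg_right (hβ j) (abs_nonneg _)
        rw [← Finset.mul_sum] at this
        linarith
      have hB : 0 ≤ (1 / (m : ℝ)) * (∑ i : Fin m, (if 0 ≤ z i then z i else -τ * z i))
          - ∑ i : Fin m, ξ i * z i := by
        rw [Finset.mul_sum, ← Finset.sum_sub_distrib]
        refine Finset.sum_nonneg fun i _ => ?_
        obtain ⟨h1, h2⟩ := hξ i
        have hm' : (0:ℝ) < m := by exact_mod_cast hm
        by_cases hz : 0 ≤ z i
        · simp only [if_pos hz]
          have : ξ i * z i ≤ (1 / (m : ℝ)) * z i :=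
            mul_le_mul_of_nonneg_right h2 hz
          linarith
        · simp only [if_neg hz]
          push_neg at hz
          have : (-τ / (m : ℝ)) * z i ≥ ξ i * z i :=
            mul_le_mul_of_nonpos_right h1 hz.le
          have he : (1 / (m : ℝ)) * (-τ * z i) = (-τ / (m : ℝ)) * z i := by ring
          linarith [he]
      have hC : -‖w - β‖ ≤ ⟪β - w, x⟫ := by
        have := abs_real_inner_le_norm (β - w) x
        have h1 : ‖β - w‖ * ‖x‖ ≤ ‖β - w‖ := by
          nlinarith [norm_nonneg (β - w)]
        have h2 : ‖β - w‖ = ‖w - β‖ := norm_sub_rev _ _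
        have := neg_abs_le ⟪β - w, x⟫
        linarith
      have hsum : ∑ i : Fin m, ξ i * (c - y i * ⟪u i, x⟫ - z i)
          = c * (∑ i : Fin m, ξ i) - ⟪w, x⟫ - ∑ i : Fin m, ξ i * z i := by
        rw [hwx, Finset.mul_sum, ← Finset.sum_sub_distrib, ← Finset.sum_sub_distrib]
        refine Finset.sum_congr rfl fun i _ => ?_
        ring
      have hβxe : ⟪β, x - e⟫ = ⟪β, x⟫ - ⟪β, e⟫ := inner_sub_right _ _ _
      have hβw : ⟪β - w, x⟫ = ⟪β, x⟫ - ⟪w, x⟫ := inner_sub_left _ _ _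
      simp only [hsum, hβxe]
      linarith [hA, hB, hC]
  exact key.isGLB
end

section
/- (Weak duality for elastic-net pin-SVM.) Let τ ≥ −1, μ > 0, c ∈ ℝ, u_1, …, u_m ∈ ℝⁿ, y_1, …, y_m ∈ {−1, +1}. For every x ∈ ℝⁿ with ‖x‖₂ ≤ 1, every β ∈ ℝⁿ with ‖β‖_∞ ≤ μ, and every ξ ∈ ℝᵐ with −τ/m ≤ ξ_i ≤ 1/m for all i, it holds that c∑_{i=1}^m ξ_i − ‖∑_{i=1}^m ξ_i y_i u_i − β‖₂ ≤ μ‖x‖₁ + (1/m)∑_{i=1}^m L_τ(c − y_i⟨u_i, x⟩). -/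
open scoped RealInnerProductSpace

/-- Weak duality for elastic-net pin-SVM: for any primal feasible `x` (`‖x‖₂ ≤ 1`) and any
dual feasible `(β, ξ)` (`‖β‖_∞ ≤ μ`, `-τ/m ≤ ξ_i ≤ 1/m`), the dual objective is at most
the primal objective. -/
theorem epSVM_weak_duality {n m : ℕ} (hm : 0 < m) (τ μ c : ℝ) (hτ : -1 ≤ τ) (hμ : 0 < μ)
    (u : Fin m → EuclideanSpace ℝ (Fin n)) (y : Fin m → ℝ)
    (hy : ∀ i, y i = 1 ∨ y i = -1)
    (L : ℝ → ℝ) (hL : L = fun t => if 0 ≤ t then t else -τ * t)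
    (x β : EuclideanSpace ℝ (Fin n)) (ξ : Fin m → ℝ)
    (hx : ‖x‖ ≤ 1) (hβ : ∀ j, |β j| ≤ μ)
    (hξ : ∀ i, -τ / (m : ℝ) ≤ ξ i ∧ ξ i ≤ 1 / (m : ℝ)) :
    c * (∑ i : Fin m, ξ i) - ‖(∑ i : Fin m, ξ i • (y i • u i)) - β‖ ≤
      μ * (∑ j : Fin n, |x j|) +
        (1 / (m : ℝ)) * ∑ i : Fin m, L (c - y i * ⟪u i, x⟫) := by
  set v := (∑ i : Fin m, ξ i • (y i • u i)) - β with hv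
  have h1 : ⟪v, x⟫ ≤ ‖v‖ := by
    calc ⟪v, x⟫ ≤ ‖v‖ * ‖x‖ := real_inner_le_norm v x
      _ ≤ ‖v‖ * 1 := by
          have := norm_nonneg v
          nlinarith
      _ = ‖v‖ := mul_one _
  have hinner : ⟪v, x⟫ = (∑ i : Fin m, ξ i * (y i * ⟪u i, x⟫)) - ⟪β, x⟫ := by
    rw [hv, inner_sub_left, sum_inner]
    congr 1
    refine Finset.sum_congr rfl fun i _ => ?_
    rw [real_inner_smul_left, real_inner_smul_left]
  have hmpos : (0:ℝ) < (m:ℝ) := Nat.cast_pos.mpr hm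
  have key : ∀ i : Fin m, ξ i * (c - y i * ⟪u i, x⟫) ≤
      (1 / (m:ℝ)) * L (c - y i * ⟪u i, x⟫) := by
    intro i
    obtain ⟨hlo, hhi⟩ := hξ i
    set t := c - y i * ⟪u i, x⟫ with ht
    rw [hL]
    by_cases h : 0 ≤ t
    · simp only [h, if_pos]
      exact mul_le_mul_of_nonneg_right hhi h
    · simp only [h, if_neg]
      push_neg at h
      have : (-τ / (m:ℝ)) * t ≤ ξ i * t → True := fun _ => trivial
      have h2 : ξ i * t ≤ (-τ / (m:ℝ)) * t :=
        mul_le_mul_of_nonpos_right hlo (le_of_lt h)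
      calc ξ i * t ≤ (-τ / (m:ℝ)) * t := h2
        _ = (1 / (m:ℝ)) * (-τ * t) := by ring
  have hsum : ∑ i : Fin m, ξ i * (c - y i * ⟪u i, x⟫) ≤
      (1 / (m:ℝ)) * ∑ i : Fin m, L (c - y i * ⟪u i, x⟫) := by
    rw [Finset.mul_sum]
    exact Finset.sum_le_sum fun i _ => key i
  have hβx : ⟪β, x⟫ ≤ μ * ∑ j : Fin n, |x j| := by
    have hβeq : ⟪β, x⟫ = ∑ j : Fin n, β j * x j := by
      simp [PiLp.inner_apply, RCLike.inner_apply]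
      exact Finset.sum_congr rfl fun j _ => mul_comm _ _
    rw [hβeq, Finset.mul_sum]
    refine Finset.sum_le_sum fun j _ => ?_
    calc β j * x j ≤ |β j * x j| := le_abs_self _
      _ = |β j| * |x j| := abs_mul _ _
      _ ≤ μ * |x j| := mul_le_mul_of_nonneg_right (hβ j) (abs_nonneg _)
  have hexp : ∑ i : Fin m, ξ i * (c - y i * ⟪u i, x⟫) =
      c * (∑ i : Fin m, ξ i) - ∑ i : Fin m, ξ i * (y i * ⟪u i, x⟫) := by
    simp only [mul_sub, Finset.sum_sub_distrib, Finset.mul_sum]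
    congr 1
    exact Finset.sum_congr rfl fun i _ => mul_comm _ _
  linarith
end

section
/- (Optimality certificate on the unit sphere — Case 1 of Theorem 1.) Let τ ≥ −1, μ > 0, c ∈ ℝ, u_1, …, u_m ∈ ℝⁿ, y_1, …, y_m ∈ {−1, +1}. Let ξ ∈ ℝᵐ satisfy −τ/m ≤ ξ_i ≤ 1/m for all i, set v = ∑_{i=1}^m ξ_i y_i u_i, define β ∈ ℝⁿ componentwise by β_j = max{−μ, min{μ, v_j}}, and set w = v − β. Suppose w ≠ 0 and define x* = w/‖w‖₂. If for every i: (c − y_i⟨u_i, x*⟩ > 0 implies ξ_i = 1/m) and (c − y_i⟨u_i, x*⟩ < 0 implies ξ_i = −τ/m), then x* is a global minimizer of P(x) = μ‖x‖₁ + (1/m)∑_{i=1}^m L_τ(c − y_i⟨u_i, x⟩) over {x ∈ ℝⁿ : ‖x‖₂ ≤ 1}. -/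
open scoped RealInnerProductSpace

/-- Case 1 of Theorem 1: optimality certificate on the unit sphere. With `v = ∑ ξ_i y_i u_i`,
`β` the componentwise clamp of `v` to `[-μ, μ]`, `w = v - β ≠ 0` and `x* = w/‖w‖`, the
complementarity conditions on `ξ` imply that `x*` globally minimizes the ep-SVM objective
over the unit ball. -/
theorem epSVM_sphere_optimality {n m : ℕ} (hm : 0 < m) (τ μ c : ℝ) (hτ : -1 ≤ τ) (hμ : 0 < μ)
    (u : Fin m → EuclideanSpace ℝ (Fin n)) (y : Fin m → ℝ)
    (hy : ∀ i, y i = 1 ∨ y i = -1)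
    (L : ℝ → ℝ) (hL : L = fun t => if 0 ≤ t then t else -τ * t)
    (ξ : Fin m → ℝ) (hξ : ∀ i, -τ / (m : ℝ) ≤ ξ i ∧ ξ i ≤ 1 / (m : ℝ))
    (v β w : EuclideanSpace ℝ (Fin n))
    (hv : v = ∑ i : Fin m, ξ i • (y i • u i))
    (hβ : ∀ j, β j = max (-μ) (min μ (v j)))
    (hw : w = v - β) (hw0 : w ≠ 0)
    (xstar : EuclideanSpace ℝ (Fin n)) (hxstar : xstar = ‖w‖⁻¹ • w)
    (hcomp : ∀ i, (0 < c - y i * ⟪u i, xstar⟫ → ξ i = 1 / (m : ℝ)) ∧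
                  (c - y i * ⟪u i, xstar⟫ < 0 → ξ i = -τ / (m : ℝ))) :
    ∀ x : EuclideanSpace ℝ (Fin n), ‖x‖ ≤ 1 →
      μ * (∑ j : Fin n, |xstar j|) +
          (1 / (m : ℝ)) * ∑ i : Fin m, L (c - y i * ⟪u i, xstar⟫) ≤
        μ * (∑ j : Fin n, |x j|) +
          (1 / (m : ℝ)) * ∑ i : Fin m, L (c - y i * ⟪u i, x⟫) := by
  intro x hx
  have hm' : (0:ℝ) < (m:ℝ) := by exact_mod_cast hm
  have hμ0 : (0:ℝ) ≤ μ := hμ.le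
  set S : ℝ := ∑ i : Fin m, ξ i with hS
  -- inner product of β with anything, coordinatewise
  have hinnβ : ∀ z : EuclideanSpace ℝ (Fin n), ⟪β, z⟫ = ∑ j, β j * z j := by
    intro z
    simp [PiLp.inner_apply, RCLike.inner_apply]
    exact Finset.sum_congr rfl fun j _ => mul_comm _ _
  -- |β j| ≤ μ
  have hβabs : ∀ j, |β j| ≤ μ := by
    intro j
    rw [hβ, abs_le]
    constructor
    · exact le_max_left _ _
    · exact max_le (by linarith) (min_le_left _ _)
  -- ⟪v, z⟫ expansion
  have hvx : ∀ z : EuclideanSpace ℝ (Fin n),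
      ⟪v, z⟫ = ∑ i, ξ i * (y i * ⟪u i, z⟫) := by
    intro z
    rw [hv, sum_inner]
    refine Finset.sum_congr rfl fun i _ => ?_
    rw [real_inner_smul_left, real_inner_smul_left]
  -- ∑ ξ_i (c - y_i ⟪u_i, z⟫) = S c - ⟪v, z⟫
  have hsum : ∀ z : EuclideanSpace ℝ (Fin n),
      ∑ i, ξ i * (c - y i * ⟪u i, z⟫) = S * c - ⟪v, z⟫ := by
    intro z
    rw [hvx z, hS, Finset.sum_mul, ← Finset.sum_sub_distrib]
    exact Finset.sum_congr rfl fun i _ => by ring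
  -- pinball lower bound
  have hLlb : ∀ (i : Fin m) (t : ℝ), ξ i * t ≤ (1 / (m:ℝ)) * L t := by
    intro i t
    obtain ⟨h1, h2⟩ := hξ i
    rw [hL]
    by_cases ht : 0 ≤ t
    · simp only [if_pos ht]
      exact mul_le_mul_of_nonneg_right h2 ht
    · simp only [if_neg ht]
      push_neg at ht
      have : -τ / (m:ℝ) * t = 1 / (m:ℝ) * (-τ * t) := by ring
      nlinarith [mul_le_mul_of_nonpos_right h1 ht.le]
  -- global lower bound: S c - ⟪w, z⟫ ≤ P(z)
  have lower : ∀ z : EuclideanSpace ℝ (Fin n),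
      S * c - ⟪w, z⟫ ≤
        μ * (∑ j, |z j|) + (1 / (m:ℝ)) * ∑ i, L (c - y i * ⟪u i, z⟫) := by
    intro z
    have h1 : S * c - ⟪v, z⟫ ≤ (1 / (m:ℝ)) * ∑ i, L (c - y i * ⟪u i, z⟫) := by
      rw [← hsum z, Finset.mul_sum]
      exact Finset.sum_le_sum fun i _ => hLlb i _
    have h2 : ⟪β, z⟫ ≤ μ * ∑ j, |z j| := by
      rw [hinnβ, Finset.mul_sum]
      refine Finset.sum_le_sum fun j _ => ?_
      calc β j * z j ≤ |β j * z j| := le_abs_self _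
        _ = |β j| * |z j| := abs_mul _ _
        _ ≤ μ * |z j| := mul_le_mul_of_nonneg_right (hβabs j) (abs_nonneg _)
    have h3 : ⟪w, z⟫ = ⟪v, z⟫ - ⟪β, z⟫ := by rw [hw, inner_sub_left]
    linarith
  -- equality at xstar
  have hwn : ‖w‖ ≠ 0 := norm_ne_zero_iff.mpr hw0
  have hwpos : (0:ℝ) < ‖w‖ := norm_pos_iff.mpr hw0
  have hxj : ∀ j, xstar j = ‖w‖⁻¹ * w j := by
    intro j; rw [hxstar]; rfl
  have hwj : ∀ j, w j = v j - β j := by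
    intro j; rw [hw]; rfl
  -- β j * w j = μ |w j|
  have hkey : ∀ j, β j * w j = μ * |w j| := by
    intro j
    rcases lt_trichotomy (v j) (-μ) with h | h | h
    · have hβj : β j = -μ := by
        rw [hβ, min_eq_right (by linarith), max_eq_left (by linarith)]
      have hwj' : w j = v j + μ := by rw [hwj, hβj]; ring
      have : w j < 0 := by rw [hwj']; linarith
      rw [hβj, abs_of_neg this]; ring
    · have hβj : β j = -μ := by
        rw [hβ, h, min_eq_right (by linarith), max_eq_left (by linarith)]
      have : w j = 0 := by rw [hwj, hβj, h]; ring
      simp [this]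
    · rcases le_or_gt (v j) μ with h' | h'
      · have hβj : β j = v j := by
          rw [hβ, min_eq_right h', max_eq_right (by linarith)]
        have : w j = 0 := by rw [hwj, hβj]; ring
        simp [this]
      · have hβj : β j = μ := by
          rw [hβ, min_eq_left h'.le, max_eq_right (by linarith)]
        have : 0 < w j := by rw [hwj, hβj]; linarith
        rw [hβj, abs_of_pos this]
  have eq1 : μ * (∑ j, |xstar j|) = ⟪β, xstar⟫ := by
    rw [hinnβ, Finset.mul_sum]
    refine Finset.sum_congr rfl fun j _ => ?_
    rw [hxj j, abs_mul, abs_of_nonneg (inv_nonneg.mpr (norm_nonneg w))]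
    linear_combination (-‖w‖⁻¹) * (hkey j)
  have eq2 : (1 / (m:ℝ)) * ∑ i, L (c - y i * ⟪u i, xstar⟫)
      = S * c - ⟪v, xstar⟫ := by
    rw [← hsum xstar, Finset.mul_sum]
    refine Finset.sum_congr rfl fun i _ => ?_
    set t := c - y i * ⟪u i, xstar⟫ with ht
    obtain ⟨hc1, hc2⟩ := hcomp i
    rcases lt_trichotomy t 0 with h | h | h
    · rw [hc2 h, hL]
      simp only [if_neg (not_le.mpr h)]
      ring
    · simp [hL, h]
    · rw [hc1 h, hL]
      simp only [if_pos h.le]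
  have eq3 : ⟪w, xstar⟫ = ‖w‖ := by
    rw [hxstar, real_inner_smul_right, real_inner_self_eq_norm_sq]
    field_simp
  have hPv : μ * (∑ j, |xstar j|) + (1 / (m:ℝ)) * ∑ i, L (c - y i * ⟪u i, xstar⟫)
      = S * c - ‖w‖ := by
    rw [eq1, eq2, ← eq3, hw, inner_sub_left]
    ring
  -- conclude
  have hwx : ⟪w, x⟫ ≤ ‖w‖ := by
    calc ⟪w, x⟫ ≤ ‖w‖ * ‖x‖ := real_inner_le_norm w x
      _ ≤ ‖w‖ * 1 := mul_le_mul_of_nonneg_left hx (norm_nonneg w)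
      _ = ‖w‖ := mul_one _
  have := lower x
  rw [hPv]
  linarith
end

section
/- (Optimality certificate in the interior — Case 2 of Theorem 1.) Let τ ≥ −1, μ > 0, c ∈ ℝ, u_1, …, u_m ∈ ℝⁿ, y_1, …, y_m ∈ {−1, +1}. Let ξ ∈ ℝᵐ satisfy −τ/m ≤ ξ_i ≤ 1/m for all i, set v = ∑_{i=1}^m ξ_i y_i u_i, and suppose ‖v‖_∞ ≤ μ. Let x ∈ ℝⁿ satisfy: ‖x‖₂ ≤ 1; x_j = 0 whenever |v_j| < μ; x_j ≥ 0 whenever v_j = μ; x_j ≤ 0 whenever v_j = −μ; c − y_i⟨u_i, x⟩ ≥ 0 whenever ξ_i = 1/m; c − y_i⟨u_i, x⟩ ≤ 0 whenever ξ_i = −τ/m; and c − y_i⟨u_i, x⟩ = 0 whenever −τ/m < ξ_i < 1/m. Then x is a global minimizer of P(x) = μ‖x‖₁ + (1/m)∑_{i=1}^m L_τ(c − y_i⟨u_i, x⟩) over {x : ‖x‖₂ ≤ 1}, and P(x) = c∑_{i=1}^m ξ_i. -/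
open scoped RealInnerProductSpace

/-- Case 2 of Theorem 1: optimality certificate in the interior. With `v = ∑ ξ_i y_i u_i`
and `‖v‖_∞ ≤ μ`, any `x` in the unit ball satisfying the listed sign and complementarity
conditions globally minimizes the ep-SVM objective over the unit ball, with optimal value
`c ∑ ξ_i`. -/
theorem epSVM_interior_optimality {n m : ℕ} (hm : 0 < m) (τ μ c : ℝ) (hτ : -1 ≤ τ) (hμ : 0 < μ)
    (u : Fin m → EuclideanSpace ℝ (Fin n)) (y : Fin m → ℝ)
    (hy : ∀ i, y i = 1 ∨ y i = -1)
    (L : ℝ → ℝ) (hL : L = fun t => if 0 ≤ t then t else -τ * t)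
    (ξ : Fin m → ℝ) (hξ : ∀ i, -τ / (m : ℝ) ≤ ξ i ∧ ξ i ≤ 1 / (m : ℝ))
    (v : EuclideanSpace ℝ (Fin n)) (hv : v = ∑ i : Fin m, ξ i • (y i • u i))
    (hvμ : ∀ j, |v j| ≤ μ)
    (x : EuclideanSpace ℝ (Fin n)) (hx2 : ‖x‖ ≤ 1)
    (hx0 : ∀ j, |v j| < μ → x j = 0)
    (hxp : ∀ j, v j = μ → 0 ≤ x j)
    (hxn : ∀ j, v j = -μ → x j ≤ 0)
    (hc1 : ∀ i, ξ i = 1 / (m : ℝ) → 0 ≤ c - y i * ⟪u i, x⟫)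
    (hc2 : ∀ i, ξ i = -τ / (m : ℝ) → c - y i * ⟪u i, x⟫ ≤ 0)
    (hc3 : ∀ i, -τ / (m : ℝ) < ξ i → ξ i < 1 / (m : ℝ) → c - y i * ⟪u i, x⟫ = 0) :
    (∀ x' : EuclideanSpace ℝ (Fin n), ‖x'‖ ≤ 1 →
        μ * (∑ j : Fin n, |x j|) +
            (1 / (m : ℝ)) * ∑ i : Fin m, L (c - y i * ⟪u i, x⟫) ≤
          μ * (∑ j : Fin n, |x' j|) +
            (1 / (m : ℝ)) * ∑ i : Fin m, L (c - y i * ⟪u i, x'⟫)) ∧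
      μ * (∑ j : Fin n, |x j|) +
          (1 / (m : ℝ)) * ∑ i : Fin m, L (c - y i * ⟪u i, x⟫) =
        c * ∑ i : Fin m, ξ i := by
  have hm' : (0:ℝ) < m := by exact_mod_cast hm
  -- inner product identity
  have hinner : ∀ x' : EuclideanSpace ℝ (Fin n),
      ∑ j : Fin n, v j * x' j = ∑ i : Fin m, ξ i * (y i * ⟪u i, x'⟫) := by
    intro x'
    have h1 : ⟪v, x'⟫ = ∑ i : Fin m, ξ i * (y i * ⟪u i, x'⟫) := by
      rw [hv, sum_inner]
      exact Finset.sum_congr rfl fun i _ => by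
        rw [real_inner_smul_left, real_inner_smul_left]
    rw [← h1]
    simp only [PiLp.inner_apply, RCLike.inner_apply, conj_trivial]
    exact Finset.sum_congr rfl fun j _ => mul_comm _ _
  -- pointwise loss lower bound
  have hLb : ∀ (i : Fin m) (t : ℝ), ξ i * t ≤ (1 / (m:ℝ)) * L t := by
    intro i t
    obtain ⟨h1, h2⟩ := hξ i
    rw [hL]
    by_cases ht : 0 ≤ t
    · simp only [if_pos ht]
      exact mul_le_mul_of_nonneg_right h2 ht
    · simp only [if_neg ht]
      push_neg at ht
      have hrw : (1 / (m:ℝ)) * (-τ * t) = (-τ / (m:ℝ)) * t := by ring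
      rw [hrw]
      exact mul_le_mul_of_nonpos_right h1 ht.le
  -- pointwise loss equality at x
  have hLe : ∀ i : Fin m,
      ξ i * (c - y i * ⟪u i, x⟫) = (1 / (m:ℝ)) * L (c - y i * ⟪u i, x⟫) := by
    intro i
    obtain ⟨h1, h2⟩ := hξ i
    simp only [hL]
    rcases eq_or_lt_of_le h2 with h2e | h2s
    · rw [if_pos (hc1 i h2e), h2e]
    · rcases eq_or_lt_of_le h1 with h1e | h1s
      · have ht := hc2 i h1e.symm
        rcases eq_or_lt_of_le ht with ht0 | htn
        · rw [ht0]; simp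
        · rw [if_neg (not_le.mpr htn), ← h1e]; ring
      · rw [hc3 i h1s h2s]; simp
  -- pointwise norm lower bound
  have hNb : ∀ (x' : EuclideanSpace ℝ (Fin n)) (j : Fin n), v j * x' j ≤ μ * |x' j| := by
    intro x' j
    calc v j * x' j ≤ |v j * x' j| := le_abs_self _
      _ = |v j| * |x' j| := abs_mul _ _
      _ ≤ μ * |x' j| := mul_le_mul_of_nonneg_right (hvμ j) (abs_nonneg _)
  -- pointwise norm equality at x
  have hNe : ∀ j : Fin n, μ * |x j| = v j * x j := by
    intro j
    rcases lt_or_eq_of_le (hvμ j) with hlt | heq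
    · rw [hx0 j hlt]; simp
    · rcases abs_eq (le_of_lt hμ) |>.mp heq with hp | hn
      · have := hxp j hp
        rw [hp, abs_of_nonneg this]
      · have := hxn j hn
        rw [hn, abs_of_nonpos this]; ring
  -- value of P at x
  have hPx : μ * (∑ j : Fin n, |x j|) +
      (1 / (m:ℝ)) * ∑ i : Fin m, L (c - y i * ⟪u i, x⟫) = c * ∑ i : Fin m, ξ i := by
    have e1 : μ * (∑ j : Fin n, |x j|) = ∑ j : Fin n, v j * x j := by
      rw [Finset.mul_sum]
      exact Finset.sum_congr rfl fun j _ => hNe j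
    have e2 : (1 / (m:ℝ)) * ∑ i : Fin m, L (c - y i * ⟪u i, x⟫)
        = ∑ i : Fin m, ξ i * (c - y i * ⟪u i, x⟫) := by
      rw [Finset.mul_sum]
      exact Finset.sum_congr rfl fun i _ => (hLe i).symm
    have e3 : ∑ i : Fin m, ξ i * (c - y i * ⟪u i, x⟫)
        = c * (∑ i : Fin m, ξ i) - ∑ j : Fin n, v j * x j := by
      rw [hinner x, Finset.mul_sum, ← Finset.sum_sub_distrib]
      exact Finset.sum_congr rfl fun i _ => by ring
    rw [e1, e2, e3]; ring
  refine ⟨fun x' _ => ?_, hPx⟩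
  rw [hPx]
  have e3 : ∑ i : Fin m, ξ i * (c - y i * ⟪u i, x'⟫)
      = c * (∑ i : Fin m, ξ i) - ∑ j : Fin n, v j * x' j := by
    rw [hinner x', Finset.mul_sum, ← Finset.sum_sub_distrib]
    exact Finset.sum_congr rfl fun i _ => by ring
  have b1 : ∑ j : Fin n, v j * x' j ≤ μ * (∑ j : Fin n, |x' j|) := by
    rw [Finset.mul_sum]
    exact Finset.sum_le_sum fun j _ => hNb x' j
  have b2 : ∑ i : Fin m, ξ i * (c - y i * ⟪u i, x'⟫)
      ≤ (1 / (m:ℝ)) * ∑ i : Fin m, L (c - y i * ⟪u i, x'⟫) := by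
    rw [Finset.mul_sum]
    exact Finset.sum_le_sum fun i _ => hLb i _
  linarith [b2, e3]
end

section
/- (ξ-subproblem closed-form maximizer, eq. (13).) Let a, w ∈ ℝⁿ and c ∈ ℝ with 0 ≤ c < ‖a‖₂. Define A = ‖a‖₂²(‖a‖₂² − c²), B = 2(‖a‖₂² − c²)⟨a, w⟩, C = ⟨a, w⟩² − c²‖w‖₂², and d̄ = (−B + √(B² − 4AC))/(2A). Then the concave function f(d) = c·d − ‖w + d·a‖₂ attains its global maximum over ℝ at d̄: f(d̄) ≥ f(d) for all d ∈ ℝ. Consequently, for any l ≤ r, the maximum of f over [l, r] is attained at max{l, min{r, d̄}}. -/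
open scoped RealInnerProductSpace

/-- ξ-subproblem closed-form maximizer: for `0 ≤ c < ‖a‖`, the concave function
`f(d) = c d - ‖w + d a‖₂` attains its global maximum over `ℝ` at
`d̄ = (-B + √(B² - 4AC)) / (2A)`; consequently its maximum over `[l, r]` is attained at
`max{l, min{r, d̄}}`. -/
theorem xi_subproblem_closed_form {n : ℕ} (a w : EuclideanSpace ℝ (Fin n)) (c : ℝ)
    (hc : 0 ≤ c) (hca : c < ‖a‖)
    (A B C dbar : ℝ)
    (hA : A = ‖a‖ ^ 2 * (‖a‖ ^ 2 - c ^ 2))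
    (hB : B = 2 * (‖a‖ ^ 2 - c ^ 2) * ⟪a, w⟫)
    (hC : C = ⟪a, w⟫ ^ 2 - c ^ 2 * ‖w‖ ^ 2)
    (hdbar : dbar = (-B + Real.sqrt (B ^ 2 - 4 * A * C)) / (2 * A)) :
    (∀ d : ℝ, c * d - ‖w + d • a‖ ≤ c * dbar - ‖w + dbar • a‖) ∧
      ∀ l r : ℝ, l ≤ r → ∀ d ∈ Set.Icc l r,
        c * d - ‖w + d • a‖ ≤
          c * max l (min r dbar) - ‖w + max l (min r dbar) • a‖ := by
  have ha : (0:ℝ) < ‖a‖ := lt_of_le_of_lt hc hca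
  have hcs : ⟪a, w⟫ ^ 2 ≤ ‖a‖ ^ 2 * ‖w‖ ^ 2 := by
    have h := real_inner_mul_inner_self_le a w
    rw [real_inner_self_eq_norm_sq, real_inner_self_eq_norm_sq] at h
    nlinarith [h]
  have hc2 : c ^ 2 < ‖a‖ ^ 2 := by nlinarith
  have hApos : (0:ℝ) < A := by rw [hA]; nlinarith
  have hdisc : 0 ≤ B ^ 2 - 4 * A * C := by
    have key : B ^ 2 - 4 * A * C =
        4 * (‖a‖ ^ 2 - c ^ 2) * c ^ 2 * (‖a‖ ^ 2 * ‖w‖ ^ 2 - ⟪a, w⟫ ^ 2) := by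
      rw [hA, hB, hC]; ring
    rw [key]
    have h1 : (0:ℝ) ≤ ‖a‖ ^ 2 - c ^ 2 := by linarith
    have h2 : (0:ℝ) ≤ ‖a‖ ^ 2 * ‖w‖ ^ 2 - ⟪a, w⟫ ^ 2 := by linarith
    positivity
  set s := Real.sqrt (B ^ 2 - 4 * A * C) with hs_def
  have hs0 : 0 ≤ s := Real.sqrt_nonneg _
  have hs2 : s ^ 2 = B ^ 2 - 4 * A * C := Real.sq_sqrt hdisc
  have hAne0 : A ≠ 0 := ne_of_gt hApos
  have hroot : A * dbar ^ 2 + B * dbar + C = 0 := by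
    have h4A : (4 * A) ≠ 0 := by positivity
    have : A * dbar ^ 2 + B * dbar + C = (s ^ 2 - (B ^ 2 - 4 * A * C)) / (4 * A) := by
      rw [hdbar]; field_simp; ring
    rw [this, hs2, sub_self, zero_div]
  -- norm expansion
  have hnorm : ∀ d : ℝ, ‖w + d • a‖ ^ 2 = ‖w‖ ^ 2 + 2 * d * ⟪a, w⟫ + d ^ 2 * ‖a‖ ^ 2 := by
    intro d
    rw [norm_add_sq_real, real_inner_smul_right, real_inner_comm, norm_smul,
      Real.norm_eq_abs, mul_pow, sq_abs]
    ring
  set t := ⟪a, w⟫ + dbar * ‖a‖ ^ 2 with ht_def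
  have hAne : (2 * A) ≠ 0 := by positivity
  have ht_eq : 2 * A * t = ‖a‖ ^ 2 * s := by
    calc 2 * A * t = 2 * A * ⟪a, w⟫ + (2 * A * ((-B + s) / (2 * A))) * ‖a‖ ^ 2 := by
          rw [ht_def, hdbar]; ring
      _ = 2 * A * ⟪a, w⟫ + (-B + s) * ‖a‖ ^ 2 := by rw [mul_div_cancel₀ _ hAne]
      _ = ‖a‖ ^ 2 * s := by rw [hA, hB]; ring
  have ht0 : 0 ≤ t := by
    nlinarith [mul_nonneg (sq_nonneg ‖a‖) hs0, ht_eq, hApos]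
  have htsq : t ^ 2 = (c * ‖w + dbar • a‖) ^ 2 := by
    have hn := hnorm dbar
    rw [hA, hB, hC] at hroot
    rw [ht_def]
    linear_combination hroot - c ^ 2 * hn
  have hfoc : c * ‖w + dbar • a‖ = t := by
    have h1 : t = Real.sqrt (t ^ 2) := (Real.sqrt_sq ht0).symm
    rw [h1, htsq, Real.sqrt_sq (by positivity)]
  -- part 1
  have part1 : ∀ d : ℝ, c * d - ‖w + d • a‖ ≤ c * dbar - ‖w + dbar • a‖ := by
    intro d
    rcases eq_or_ne (‖w + dbar • a‖) 0 with h0 | h0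
    · have hw : w = -(dbar • a) := eq_neg_of_add_eq_zero_left (norm_eq_zero.mp h0)
      have hx : w + d • a = (d - dbar) • a := by rw [hw, sub_smul]; abel
      rw [h0, hx, norm_smul, Real.norm_eq_abs]
      have h1 : c * (d - dbar) ≤ |d - dbar| * ‖a‖ := by
        calc c * (d - dbar) ≤ c * |d - dbar| :=
              mul_le_mul_of_nonneg_left (le_abs_self _) hc
          _ ≤ ‖a‖ * |d - dbar| :=
              mul_le_mul_of_nonneg_right hca.le (abs_nonneg _)
          _ = |d - dbar| * ‖a‖ := mul_comm _ _
      linarith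
    · have hu : 0 < ‖w + dbar • a‖ := lt_of_le_of_ne (norm_nonneg _) (Ne.symm h0)
      have hip : ⟪w + dbar • a, w + d • a⟫ =
          ‖w‖ ^ 2 + (d + dbar) * ⟪a, w⟫ + d * dbar * ‖a‖ ^ 2 := by
        simp only [inner_add_left, inner_add_right, real_inner_smul_left,
          real_inner_smul_right, real_inner_self_eq_norm_sq, real_inner_comm w a]
        ring
      have h2 : ‖w + dbar • a‖ ^ 2 + (d - dbar) * (c * ‖w + dbar • a‖) ≤
          ‖w + dbar • a‖ * ‖w + d • a‖ := by
        have hle := real_inner_le_norm (w + dbar • a) (w + d • a)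
        rw [hip] at hle
        have hid : ‖w + dbar • a‖ ^ 2 + (d - dbar) * (c * ‖w + dbar • a‖) =
            ‖w‖ ^ 2 + (d + dbar) * ⟪a, w⟫ + d * dbar * ‖a‖ ^ 2 := by
          linear_combination hnorm dbar + (d - dbar) * hfoc + (d - dbar) * ht_def
        rw [hid]
        exact hle
      have h3 : ‖w + dbar • a‖ + (d - dbar) * c ≤ ‖w + d • a‖ := by
        apply le_of_mul_le_mul_left _ hu
        calc ‖w + dbar • a‖ * (‖w + dbar • a‖ + (d - dbar) * c)
            = ‖w + dbar • a‖ ^ 2 + (d - dbar) * (c * ‖w + dbar • a‖) := by ring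
          _ ≤ ‖w + dbar • a‖ * ‖w + d • a‖ := h2
      linarith [h3]
  refine ⟨part1, ?_⟩
  -- convexity of the norm map
  have hconv : ∀ x y τ : ℝ, 0 ≤ τ → τ ≤ 1 →
      ‖w + (τ * x + (1 - τ) * y) • a‖ ≤ τ * ‖w + x • a‖ + (1 - τ) * ‖w + y • a‖ := by
    intro x y τ hτ0 hτ1
    have hxy : w + (τ * x + (1 - τ) * y) • a = τ • (w + x • a) + (1 - τ) • (w + y • a) := by
      module
    rw [hxy]
    calc ‖τ • (w + x • a) + (1 - τ) • (w + y • a)‖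
        ≤ ‖τ • (w + x • a)‖ + ‖(1 - τ) • (w + y • a)‖ := norm_add_le _ _
      _ = τ * ‖w + x • a‖ + (1 - τ) * ‖w + y • a‖ := by
          rw [norm_smul, norm_smul, Real.norm_eq_abs, Real.norm_eq_abs,
            abs_of_nonneg hτ0, abs_of_nonneg (by linarith)]
  have hright : ∀ x y : ℝ, dbar ≤ x → x ≤ y →
      c * y - ‖w + y • a‖ ≤ c * x - ‖w + x • a‖ := by
    intro x y hdx hxy
    rcases eq_or_lt_of_le (hdx.trans hxy) with h | h
    · have hx : x = y := le_antisymm hxy (h ▸ hdx)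
      rw [hx]
    · set τ : ℝ := (y - x) / (y - dbar) with hτ
      have hyd : 0 < y - dbar := by linarith
      have hτ0 : 0 ≤ τ := div_nonneg (by linarith) hyd.le
      have hτ1 : τ ≤ 1 := by rw [div_le_one hyd]; linarith
      have hx : x = τ * dbar + (1 - τ) * y := by
        have h := div_mul_cancel₀ (y - x) hyd.ne'; rw [← hτ] at h; linear_combination h
      have h1 := hconv dbar y τ hτ0 hτ1
      have h2 := part1 y
      have hmul := mul_le_mul_of_nonneg_left h2 hτ0
      rw [hx]
      linarith [h1, hmul]
  have hleft : ∀ x y : ℝ, x ≤ y → y ≤ dbar →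
      c * x - ‖w + x • a‖ ≤ c * y - ‖w + y • a‖ := by
    intro x y hxy hyd
    rcases eq_or_lt_of_le (hxy.trans hyd) with h | h
    · have hx : x = y := le_antisymm hxy (h ▸ hyd)
      rw [hx]
    · set τ : ℝ := (y - x) / (dbar - x) with hτ
      have hyd' : 0 < dbar - x := by linarith
      have hτ0 : 0 ≤ τ := div_nonneg (by linarith) hyd'.le
      have hτ1 : τ ≤ 1 := by rw [div_le_one hyd']; linarith
      have hy : y = τ * dbar + (1 - τ) * x := by
        have h := div_mul_cancel₀ (y - x) hyd'.ne'; rw [← hτ] at h; linear_combination -h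
      have h1 := hconv dbar x τ hτ0 hτ1
      have h2 := part1 x
      have hmul := mul_le_mul_of_nonneg_left h2 hτ0
      rw [hy]
      linarith [h1, hmul]
  intro l r hlr d hd
  obtain ⟨hdl, hdr⟩ := hd
  rcases le_or_gt dbar l with h1 | h1
  · have hm : max l (min r dbar) = l := by
      rw [min_eq_right (h1.trans hlr), max_eq_left h1]
    rw [hm]
    exact hright l d h1 hdl
  · rcases le_or_gt r dbar with h2 | h2
    · have hm : max l (min r dbar) = r := by
        rw [min_eq_left h2, max_eq_right hlr]
      rw [hm]
      exact hleft d r hdr h2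
    · have hm : max l (min r dbar) = dbar := by
        rw [min_eq_right h2.le, max_eq_right h1.le]
      rw [hm]
      exact part1 d
end

section
/- (Closed-form solution of the passive model, the τ = −1 case of ep-SVM.) Let μ > 0 and v ∈ ℝⁿ, and define the soft-thresholding s ∈ ℝⁿ by s_j = sign(v_j)·max{|v_j| − μ, 0}. If s ≠ 0, then x* = s/‖s‖₂ is a global minimizer of μ‖x‖₁ − ⟨v, x⟩ over {x ∈ ℝⁿ : ‖x‖₂ ≤ 1}, and the minimum value is −‖s‖₂. If s = 0, then x = 0 is a global minimizer and the minimum value is 0. -/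
open scoped RealInnerProductSpace

/-- Closed-form solution of the passive model: with soft-thresholding
`s_j = sign(v_j) max{|v_j| - μ, 0}`, if `s ≠ 0` then `x* = s/‖s‖₂` globally minimizes
`μ‖x‖₁ - ⟪v, x⟫` over the unit ball with minimum value `-‖s‖₂`; if `s = 0` then `x = 0`
is a global minimizer with minimum value `0`. -/
theorem passive_closed_form {n : ℕ} (μ : ℝ) (hμ : 0 < μ)
    (v s : EuclideanSpace ℝ (Fin n))
    (hs : ∀ j, s j = Real.sign (v j) * max (|v j| - μ) 0) :
    (s ≠ 0 →
        (∀ x : EuclideanSpace ℝ (Fin n), ‖x‖ ≤ 1 →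
            μ * (∑ j : Fin n, |(‖s‖⁻¹ • s : EuclideanSpace ℝ (Fin n)) j|) -
                ⟪v, ‖s‖⁻¹ • s⟫ ≤
              μ * (∑ j : Fin n, |x j|) - ⟪v, x⟫) ∧
          μ * (∑ j : Fin n, |(‖s‖⁻¹ • s : EuclideanSpace ℝ (Fin n)) j|) -
              ⟪v, ‖s‖⁻¹ • s⟫ = -‖s‖) ∧
      (s = 0 →
        ∀ x : EuclideanSpace ℝ (Fin n), ‖x‖ ≤ 1 →
          (0 : ℝ) ≤ μ * (∑ j : Fin n, |x j|) - ⟪v, x⟫) := by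
  -- |s j| = max (|v j| - μ) 0
  have habs : ∀ j, |s j| = max (|v j| - μ) 0 := by
    intro j
    rcases lt_trichotomy (v j) 0 with h | h | h
    · rw [hs j, Real.sign_of_neg h, abs_mul, abs_neg, abs_one, one_mul,
        abs_of_nonneg (le_max_right _ _)]
    · have : max (|v j| - μ) 0 = 0 := by
        rw [h]; simp; linarith
      rw [hs j, this, h, Real.sign_zero, zero_mul, abs_zero]
    · rw [hs j, Real.sign_of_pos h, one_mul, abs_of_nonneg (le_max_right _ _)]
  -- v j * s j = |v j| * max (|v j| - μ) 0
  have hvs : ∀ j, v j * s j = |v j| * max (|v j| - μ) 0 := by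
    intro j
    rcases lt_trichotomy (v j) 0 with h | h | h
    · rw [hs j, Real.sign_of_neg h, abs_of_neg h]; ring
    · have : max (|v j| - μ) 0 = 0 := by
        rw [h]; simp; linarith
      rw [hs j, this, h]; simp
    · rw [hs j, Real.sign_of_pos h, abs_of_pos h]; ring
  -- key per-coordinate identity
  have hkey : ∀ j, v j * s j - μ * |s j| = |s j| ^ 2 := by
    intro j
    rcases le_or_gt (|v j| - μ) 0 with h | h
    · have hm : max (|v j| - μ) 0 = 0 := max_eq_right h
      rw [hvs j, habs j, hm]; ring
    · have hm : max (|v j| - μ) 0 = |v j| - μ := max_eq_left h.le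
      rw [hvs j, habs j, hm]; ring
  have hnormsq : ∀ y : EuclideanSpace ℝ (Fin n), ‖y‖ ^ 2 = ∑ j, y j ^ 2 := by
    intro y
    rw [EuclideanSpace.norm_eq, Real.sq_sqrt (by positivity)]
    simp [Real.norm_eq_abs, sq_abs]
  -- lower bound: for every x with ‖x‖ ≤ 1
  have hlow : ∀ x : EuclideanSpace ℝ (Fin n), ‖x‖ ≤ 1 →
      -‖s‖ ≤ μ * (∑ j : Fin n, |x j|) - ⟪v, x⟫ := by
    intro x hx
    have hinner : ⟪v, x⟫ = ∑ j, v j * x j := by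
      simp [PiLp.inner_apply, RCLike.inner_apply, mul_comm]
    have h1 : ∀ j, -(|s j| * |x j|) ≤ μ * |x j| - v j * x j := by
      intro j
      have h2 : v j * x j ≤ |v j| * |x j| := by
        calc v j * x j ≤ |v j * x j| := le_abs_self _
        _ = |v j| * |x j| := abs_mul _ _
      have h3 : |v j| - μ ≤ |s j| := by rw [habs j]; exact le_max_left _ _
      nlinarith [abs_nonneg (x j)]
    have hCS : ∑ j, |s j| * |x j| ≤ ‖s‖ * ‖x‖ := by
      have h4 := Finset.sum_mul_sq_le_sq_mul_sq Finset.univ (fun j => |s j|) (fun j => |x j|)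
      have h5 : (∑ j, |s j| ^ 2) = ‖s‖ ^ 2 := by
        rw [hnormsq s]; simp [sq_abs]
      have h6 : (∑ j, |x j| ^ 2) = ‖x‖ ^ 2 := by
        rw [hnormsq x]; simp [sq_abs]
      rw [h5, h6] at h4
      have hsum : 0 ≤ ∑ j, |s j| * |x j| :=
        Finset.sum_nonneg fun j _ => mul_nonneg (abs_nonneg _) (abs_nonneg _)
      nlinarith [norm_nonneg s, norm_nonneg x, mul_nonneg (norm_nonneg s) (norm_nonneg x)]
    have hsx : ‖s‖ * ‖x‖ ≤ ‖s‖ := by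
      nlinarith [norm_nonneg s]
    calc -‖s‖ ≤ -(‖s‖ * ‖x‖) := by linarith
    _ ≤ -(∑ j, |s j| * |x j|) := by linarith
    _ = ∑ j, -(|s j| * |x j|) := by rw [Finset.sum_neg_distrib]
    _ ≤ ∑ j, (μ * |x j| - v j * x j) := Finset.sum_le_sum fun j _ => h1 j
    _ = μ * (∑ j, |x j|) - ⟪v, x⟫ := by
        rw [hinner, Finset.sum_sub_distrib, Finset.mul_sum]
  constructor
  · intro hsne
    have hn : (0 : ℝ) < ‖s‖ := norm_pos_iff.mpr hsne
    have hval : μ * (∑ j : Fin n, |(‖s‖⁻¹ • s : EuclideanSpace ℝ (Fin n)) j|) -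
        ⟪v, ‖s‖⁻¹ • s⟫ = -‖s‖ := by
      have hinner : ⟪v, s⟫ = ∑ j, v j * s j := by
        simp [PiLp.inner_apply, RCLike.inner_apply, mul_comm]
      have hsmul : ∀ j, (‖s‖⁻¹ • s : EuclideanSpace ℝ (Fin n)) j = ‖s‖⁻¹ * s j := by
        intro j; rfl
      have hkeysum : ⟪v, s⟫ - μ * (∑ j, |s j|) = ‖s‖ ^ 2 := by
        rw [hinner, hnormsq s, Finset.mul_sum, ← Finset.sum_sub_distrib]
        refine Finset.sum_congr rfl fun j _ => ?_
        rw [hkey j, sq_abs]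
      have : μ * (∑ j : Fin n, |(‖s‖⁻¹ • s : EuclideanSpace ℝ (Fin n)) j|) -
          ⟪v, ‖s‖⁻¹ • s⟫ = ‖s‖⁻¹ * (μ * (∑ j, |s j|) - ⟪v, s⟫) := by
        rw [real_inner_smul_right]
        have : ∑ j : Fin n, |(‖s‖⁻¹ • s : EuclideanSpace ℝ (Fin n)) j|
            = ‖s‖⁻¹ * ∑ j, |s j| := by
          rw [Finset.mul_sum]
          refine Finset.sum_congr rfl fun j _ => ?_
          rw [hsmul j, abs_mul, abs_of_nonneg (inv_nonneg.mpr (norm_nonneg s))]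
        rw [this]; ring
      rw [this]
      have : μ * (∑ j, |s j|) - ⟪v, s⟫ = -‖s‖ ^ 2 := by linarith
      rw [this]
      field_simp
    refine ⟨fun x hx => hval ▸ hlow x hx, hval⟩
  · intro hs0 x hx
    have : ‖s‖ = 0 := by rw [hs0, norm_zero]
    have := hlow x hx
    linarith
end
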